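/- arXiv:2311.12973 — 2 statements merged into one kernel-verified Lean document; each statement's English description precedes it below -/
import Mathlib

section
/- With the same systematic-resampling setup, for every j the integer ncopies j satisfies |ncopies j - N * w̃ j| < 1; equivalently ncopies j ∈ {⌊N * w̃ j⌋, ⌈N * w̃ j⌉}. -/
lemma ceil_add_sub_ceil (a d : ℝ) :
    ⌈a + d⌉ - ⌈a⌉ = ⌊d⌋ ∨ ⌈a + d⌉ - ⌈a⌉ = ⌈d⌉ := by
  have hub : ⌈a + d⌉ ≤ ⌈a⌉ + ⌈d⌉ := by
    have : a + d ≤ (⌈a⌉ : ℝ) + ⌈d⌉ := add_le_add (Int.le_ceil a) (Int.le_ceil d)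
    calc ⌈a + d⌉ ≤ ⌈((⌈a⌉ : ℝ) + ⌈d⌉)⌉ := Int.ceil_le_ceil this
      _ = ⌈a⌉ + ⌈d⌉ := by rw [← Int.cast_add, Int.ceil_intCast]
  have hlb : ⌈a⌉ + ⌊d⌋ ≤ ⌈a + d⌉ := by
    have h1 : ((⌈a⌉ : ℝ) - 1) + ⌊d⌋ < a + d :=
      add_lt_add_of_lt_of_le (by linarith [Int.ceil_lt_add_one a]) (Int.floor_le d)
    have h2 : ((⌈a⌉ : ℝ) - 1) + ⌊d⌋ < (⌈a + d⌉ : ℝ) := lt_of_lt_of_le h1 (Int.le_ceil _)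
    have : (⌈a⌉ - 1 + ⌊d⌋ : ℤ) < ⌈a + d⌉ := by exact_mod_cast (by push_cast; linarith : ((⌈a⌉ - 1 + ⌊d⌋ : ℤ) : ℝ) < (⌈a + d⌉ : ℝ))
    omega
  have hfc : ⌈d⌉ ≤ ⌊d⌋ + 1 := Int.ceil_le_floor_add_one d
  omega

theorem systematic_resampling_copies_near_expected
    (N : ℕ) (hN : 1 ≤ N) (w : Fin N → ℝ) (hw : ∀ i, 0 ≤ w i)
    (hsum : ∑ i, w i = 1)
    (cdf : ℕ → ℝ) (hcdf0 : cdf 0 = 0)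
    (hcdf : ∀ j : Fin N, cdf (j + 1) = N * ∑ i ∈ Finset.univ.filter (· ≤ j), w i)
    (u : ℝ) (hu : u ∈ Set.Ioo (0 : ℝ) 1)
    (ncopies : Fin N → ℤ)
    (hnc : ∀ j : Fin N, ncopies j = ⌈cdf (j + 1) - u⌉ - ⌈cdf (j : ℕ) - u⌉) :
    ∀ j, |(ncopies j : ℝ) - N * w j| < 1 ∧
      (ncopies j = ⌊(N : ℝ) * w j⌋ ∨ ncopies j = ⌈(N : ℝ) * w j⌉) := by
  intro j
  -- key telescoping fact
  have key : cdf (j + 1) - cdf (j : ℕ) = N * w j := by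
    rcases Nat.eq_zero_or_pos (j : ℕ) with h0 | hpos
    · have hj0 : j = ⟨0, hN⟩ := Fin.ext h0
      have h1 := hcdf j
      rw [h0] at h1
      rw [h0, hcdf0, sub_zero, h1]
      have : Finset.univ.filter (· ≤ j) = {j} := by
        ext i
        simp only [Finset.mem_filter, Finset.mem_univ, true_and, Finset.mem_singleton]
        constructor
        · intro hi; exact Fin.ext (by have h' := Fin.le_def.mp hi; omega)
        · intro hi; exact le_of_eq hi
      rw [this, Finset.sum_singleton]
    · obtain ⟨k, hk⟩ : ∃ k, (j : ℕ) = k + 1 := ⟨(j : ℕ) - 1, by omega⟩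
      have hklt : k < N := by omega
      set j' : Fin N := ⟨k, hklt⟩ with hj'
      have h1 : cdf ((j' : ℕ) + 1) = N * ∑ i ∈ Finset.univ.filter (· ≤ j'), w i := hcdf j'
      have h2 : cdf ((j : ℕ) + 1) = N * ∑ i ∈ Finset.univ.filter (· ≤ j), w i := hcdf j
      have hjj' : (j' : ℕ) + 1 = (j : ℕ) := by simp [hj', hk]
      have hsplit : Finset.univ.filter (· ≤ j) =
          insert j (Finset.univ.filter (· ≤ j')) := by
        ext i
        simp only [Finset.mem_filter, Finset.mem_univ, true_and, Finset.mem_insert]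
        constructor
        · intro hi
          rcases eq_or_lt_of_le hi with h | h
          · exact Or.inl h
          · right
            have : (i : ℕ) < (j : ℕ) := h
            exact (by omega : (i : ℕ) ≤ k)
        · rintro (rfl | hi)
          · exact le_refl _
          · have : (i : ℕ) ≤ k := hi
            exact (by omega : (i : ℕ) ≤ (j : ℕ))
      have hnotmem : j ∉ Finset.univ.filter (· ≤ j') := by
        simp only [Finset.mem_filter, Finset.mem_univ, true_and]
        intro h
        have : (j : ℕ) ≤ k := h
        omega
      rw [h2, hsplit, Finset.sum_insert hnotmem, ← hjj', h1]; ring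
  have heq : cdf ((j : ℕ) + 1) - u = (cdf (j : ℕ) - u) + N * w j := by linarith
  have hc := ceil_add_sub_ceil (cdf (j : ℕ) - u) (N * w j)
  have hn : ncopies j = ⌈(cdf (j : ℕ) - u) + N * w j⌉ - ⌈cdf (j : ℕ) - u⌉ := by
    rw [hnc j, heq]
  rw [hn] at *
  constructor
  · rcases hc with h | h <;> rw [h]
    · rw [abs_lt]
      constructor
      · push_cast; linarith [Int.sub_one_lt_floor ((N : ℝ) * w j)]
      · push_cast; linarith [Int.floor_le ((N : ℝ) * w j)]
    · rw [abs_lt]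
      constructor
      · push_cast; linarith [Int.le_ceil ((N : ℝ) * w j)]
      · push_cast; linarith [Int.ceil_lt_add_one ((N : ℝ) * w j)]
  · exact hc
end

section
/- Let a ≤ b be reals. If u is uniformly distributed on [0,1], then the expected value of ⌈b - u⌉ - ⌈a - u⌉ equals b - a. In particular, for systematic resampling, E_u[ncopies j] = N * w̃ j. -/
open MeasureTheory intervalIntegral

lemma ceil_intervalIntegrable (x y : ℝ) :
    IntervalIntegrable (fun t : ℝ => ((⌈t⌉ : ℤ) : ℝ)) volume x y := by
  apply Monotone.intervalIntegrable
  intro s t hst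
  show ((⌈s⌉ : ℤ) : ℝ) ≤ ((⌈t⌉ : ℤ) : ℝ)
  exact_mod_cast Int.ceil_le_ceil hst

lemma ceil_sub_integral (c : ℝ) :
    ∫ u in (0:ℝ)..1, ((⌈c - u⌉ : ℤ) : ℝ) = c := by
  have h := intervalIntegral.integral_comp_sub_left (a := (0:ℝ)) (b := 1)
    (fun t : ℝ => ((⌈t⌉ : ℤ) : ℝ)) c
  simp only [sub_zero] at h
  rw [h]
  -- ∫ t in (c-1)..c, ⌈t⌉ = ∫ (⌈t⌉ - t) + ∫ t
  have hper : Function.Periodic (fun t : ℝ => ((⌈t⌉ : ℤ) : ℝ) - t) 1 := by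
    intro t
    simp [Int.ceil_add_one]
  have hint1 : IntervalIntegrable (fun t : ℝ => ((⌈t⌉ : ℤ) : ℝ) - t) volume (c-1) c :=
    (ceil_intervalIntegrable _ _).sub (intervalIntegrable_id)
  have hsplit : ∫ t in (c-1)..c, ((⌈t⌉ : ℤ) : ℝ)
      = (∫ t in (c-1)..c, (((⌈t⌉ : ℤ) : ℝ) - t)) + ∫ t in (c-1)..c, t := by
    rw [← intervalIntegral.integral_add hint1 intervalIntegrable_id]
    simp
  rw [hsplit]
  have hshift : ∫ t in (c-1)..c, (((⌈t⌉ : ℤ) : ℝ) - t)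
      = ∫ t in (0:ℝ)..1, (((⌈t⌉ : ℤ) : ℝ) - t) := by
    have := hper.intervalIntegral_add_eq (c-1) 0
    simpa using this
  have hceil01 : ∫ t in (0:ℝ)..1, ((⌈t⌉ : ℤ) : ℝ) = 1 := by
    rw [intervalIntegral.integral_of_le (by norm_num)]
    rw [setIntegral_congr_fun measurableSet_Ioc
      (fun t ht => by
        show ((⌈t⌉ : ℤ) : ℝ) = 1
        have h1 : ⌈t⌉ = 1 := Int.ceil_eq_iff.mpr ⟨by simpa using ht.1, by simpa using ht.2⟩
        simp [h1])]
    simp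
  have h01 : ∫ t in (0:ℝ)..1, (((⌈t⌉ : ℤ) : ℝ) - t) = 1/2 := by
    rw [intervalIntegral.integral_sub
      (ceil_intervalIntegrable _ _) intervalIntegrable_id, hceil01,
      integral_id]
    norm_num
  rw [hshift, h01, integral_id]
  ring

theorem systematic_resampling_unbiased
    (a b : ℝ) (hab : a ≤ b) :
    ∫ u in (0:ℝ)..1, ((⌈b - u⌉ - ⌈a - u⌉ : ℤ) : ℝ) = b - a := by
  have hint : ∀ c : ℝ, IntervalIntegrable (fun u : ℝ => ((⌈c - u⌉ : ℤ) : ℝ)) volume 0 1 := by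
    intro c
    apply Antitone.intervalIntegrable
    intro s t hst
    show ((⌈c - t⌉ : ℤ) : ℝ) ≤ ((⌈c - s⌉ : ℤ) : ℝ)
    exact_mod_cast Int.ceil_le_ceil (by linarith)
  have : ∫ u in (0:ℝ)..1, ((⌈b - u⌉ - ⌈a - u⌉ : ℤ) : ℝ)
      = (∫ u in (0:ℝ)..1, ((⌈b - u⌉ : ℤ) : ℝ)) - ∫ u in (0:ℝ)..1, ((⌈a - u⌉ : ℤ) : ℝ) := by
    rw [← intervalIntegral.integral_sub (hint b) (hint a)]
    congr 1
    ext u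
    push_cast
    ring
  rw [this, ceil_sub_integral, ceil_sub_integral]
end
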